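/- Let Y be a real random variable and f, g real numbers (predictions), and suppose E[Y⁴] < ∞. Then for every σ > 0, |E[ℓ_σ(Y − a)] − E[(Y − a)²]| ≤ E[(Y − a)⁴]/(2σ²) for any real a. In particular, if Y has mean m and E[(Y−m)⁴] ≤ M, then the minimizer over a of E[ℓ_σ(Y−a)] has excess squared loss E[(Y−a)²] − E[(Y−m)²] at most of order M/σ² as σ → ∞. -/

import Mathlib

open MeasureTheory

noncomputable def corrLoss (σ t : ℝ) : ℝ := σ^2 * (1 - Real.exp (-t^2 / σ^2))

lemma exp_neg_le_quadratic {x : ℝ} (hx : 0 ≤ x) :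
    Real.exp (-x) ≤ 1 - x + x^2/2 := by
  have h1 : 1 + x + x^2/2 ≤ Real.exp x := by
    have := Real.sum_le_exp_of_nonneg hx 3
    simp [Finset.sum_range_succ] at this
    norm_num at this
    linarith
  have h2 : (0:ℝ) < 1 + x + x^2/2 := by positivity
  have h3 : (0:ℝ) < 1 - x + x^2/2 := by nlinarith [sq_nonneg (x - 1)]
  have h4 : Real.exp (-x) = (Real.exp x)⁻¹ := Real.exp_neg x
  rw [h4]
  rw [inv_le_iff_one_le_mul₀ (lt_of_lt_of_le h2 h1)] at *
  nlinarith [sq_nonneg (x^2)]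

lemma corrLoss_bounds (σ t : ℝ) (hσ : 0 < σ) :
    0 ≤ t^2 - corrLoss σ t ∧ t^2 - corrLoss σ t ≤ t^4/(2*σ^2) := by
  have hσ2 : (0:ℝ) < σ^2 := by positivity
  set x : ℝ := t^2 / σ^2 with hxdef
  have hx : 0 ≤ x := by positivity
  have hx' : t^2 = σ^2 * x := by rw [hxdef]; field_simp [hσ.ne']
  have hne : -t^2 / σ^2 = -x := by field_simp [hxdef]; rw [hx']
  have hcl : corrLoss σ t = σ^2 * (1 - Real.exp (-x)) := by
    rw [corrLoss, hne]
  constructor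
  · have := Real.add_one_le_exp (-x)
    rw [hcl, hx']
    nlinarith
  · have hq := exp_neg_le_quadratic hx
    rw [hcl, hx']
    have ht4 : t^4 = σ^4 * x^2 := by
      have : t^4 = (t^2)^2 := by ring
      rw [this, hx']; ring
    rw [ht4]
    have heq : σ^4 * x^2 / (2*σ^2) = σ^2 * x^2 / 2 := by
      field_simp
    rw [heq]
    nlinarith

lemma corrLoss_nonneg_le (σ t : ℝ) (hσ : 0 < σ) :
    0 ≤ corrLoss σ t ∧ corrLoss σ t ≤ σ^2 := by
  have h1 : Real.exp (-t^2 / σ^2) ≤ 1 := by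
    apply Real.exp_le_one_iff.mpr
    have : (0:ℝ) ≤ t^2 / σ^2 := by positivity
    rw [neg_div]; linarith
  have h2 : 0 < Real.exp (-t^2 / σ^2) := Real.exp_pos _
  constructor
  · rw [corrLoss]; nlinarith
  · rw [corrLoss]; nlinarith

theorem corrLoss_risk_comparison (Ω : Type*) [MeasurableSpace Ω]
    (P : Measure Ω) [IsProbabilityMeasure P]
    (Y : Ω → ℝ) (hY : Measurable Y)
    (hY1 : Integrable Y P) (hY2 : Integrable (fun ω => (Y ω)^2) P)
    (hY4 : Integrable (fun ω => (Y ω)^4) P)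
    (σ : ℝ) (hσ : 0 < σ) :
    (∀ a : ℝ,
      |(∫ ω, corrLoss σ (Y ω - a) ∂P) - ∫ ω, (Y ω - a)^2 ∂P|
        ≤ (∫ ω, (Y ω - a)^4 ∂P) / (2 * σ^2)) ∧
    (∀ (M a : ℝ),
      (∫ ω, (Y ω - (∫ ω', Y ω' ∂P))^4 ∂P) ≤ M →
      (∀ b : ℝ, (∫ ω, corrLoss σ (Y ω - a) ∂P) ≤ ∫ ω, corrLoss σ (Y ω - b) ∂P) →
      (∫ ω, (Y ω - a)^2 ∂P) - (∫ ω, (Y ω - (∫ ω', Y ω' ∂P))^2 ∂P)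
        ≤ (∫ ω, (Y ω - a)^4 ∂P) / (2 * σ^2)) := by
  have hσ2 : (0:ℝ) < σ^2 := by positivity
  -- measurability/integrability helpers
  have hmeas_corr : ∀ a : ℝ, Measurable (fun ω => corrLoss σ (Y ω - a)) := by
    intro a
    have hc : Continuous (fun t : ℝ => corrLoss σ t) := by
      unfold corrLoss; continuity
    exact hc.measurable.comp (hY.sub measurable_const)
  have hint_corr : ∀ a : ℝ, Integrable (fun ω => corrLoss σ (Y ω - a)) P := by
    intro a
    apply Integrable.mono' (integrable_const (σ^2)) (hmeas_corr a).aestronglyMeasurable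
    filter_upwards with ω
    have h := corrLoss_nonneg_le σ (Y ω - a) hσ
    rw [Real.norm_eq_abs, abs_of_nonneg h.1]; exact h.2
  have hint_sq : ∀ a : ℝ, Integrable (fun ω => (Y ω - a)^2) P := by
    intro a
    have hb : Integrable (fun ω => 2 * (Y ω)^2 + 2 * a^2) P :=
      (hY2.const_mul 2).add (integrable_const _)
    apply Integrable.mono' hb ((hY.sub measurable_const).pow_const 2).aestronglyMeasurable
    filter_upwards with ω
    simp only [Pi.sub_apply]
    rw [Real.norm_eq_abs, abs_of_nonneg (by positivity : (0:ℝ) ≤ (Y ω - a)^2)]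
    nlinarith [sq_nonneg (Y ω + a)]
  have hint_q : ∀ a : ℝ, Integrable (fun ω => (Y ω - a)^4) P := by
    intro a
    have hb : Integrable (fun ω => 8 * (Y ω)^4 + 8 * a^4) P :=
      (hY4.const_mul 8).add (integrable_const _)
    apply Integrable.mono' hb ((hY.sub measurable_const).pow_const 4).aestronglyMeasurable
    filter_upwards with ω
    have h4 : 0 ≤ (Y ω - a)^4 := by positivity
    simp only [Pi.sub_apply]
    rw [Real.norm_eq_abs, abs_of_nonneg h4]
    nlinarith [sq_nonneg ((Y ω)^2 - a^2), sq_nonneg ((Y ω)^2 + a^2),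
      sq_nonneg (Y ω - a), sq_nonneg (Y ω + a), sq_nonneg (Y ω * a),
      sq_nonneg ((Y ω - a) * (Y ω + a))]
  -- key integral comparison
  have key : ∀ a : ℝ,
      0 ≤ (∫ ω, (Y ω - a)^2 ∂P) - (∫ ω, corrLoss σ (Y ω - a) ∂P) ∧
      (∫ ω, (Y ω - a)^2 ∂P) - (∫ ω, corrLoss σ (Y ω - a) ∂P)
        ≤ (∫ ω, (Y ω - a)^4 ∂P) / (2 * σ^2) := by
    intro a
    have hsub : (∫ ω, (Y ω - a)^2 ∂P) - (∫ ω, corrLoss σ (Y ω - a) ∂P)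
        = ∫ ω, ((Y ω - a)^2 - corrLoss σ (Y ω - a)) ∂P :=
      (integral_sub (hint_sq a) (hint_corr a)).symm
    constructor
    · rw [hsub]
      apply integral_nonneg
      intro ω
      exact (corrLoss_bounds σ (Y ω - a) hσ).1
    · rw [hsub]
      have hmono : (∫ ω, ((Y ω - a)^2 - corrLoss σ (Y ω - a)) ∂P)
          ≤ ∫ ω, (Y ω - a)^4 / (2 * σ^2) ∂P := by
        apply integral_mono ((hint_sq a).sub (hint_corr a)) ((hint_q a).div_const _)
        intro ω
        exact (corrLoss_bounds σ (Y ω - a) hσ).2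
      rwa [integral_div] at hmono
  constructor
  · intro a
    have h := key a
    rw [abs_sub_comm, abs_sub_le_iff]
    constructor
    · linarith [h.1, h.2]
    · have hnn : (0:ℝ) ≤ (∫ ω, (Y ω - a)^4 ∂P) / (2 * σ^2) := by
        apply div_nonneg _ (by positivity)
        apply integral_nonneg; intro ω; positivity
      linarith [h.1, hnn]
  · intro M a _ hmin
    set m := ∫ ω', Y ω' ∂P
    have h1 := (key a).2
    have h2 := hmin m
    have h3 : (∫ ω, corrLoss σ (Y ω - m) ∂P) ≤ ∫ ω, (Y ω - m)^2 ∂P := by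
      have := (key m).1; linarith
    linarith
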